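/- For x1, x2 in [0,1], the function h_D(x1,x2) := 2 h_b((x1+x2)/2) - h_b(x1) - h_b(x2), where h_b is the binary entropy function h_b(x) = -x log2 x - (1-x) log2 (1-x), satisfies h_D(x1, x2) ≥ (x1 - x2)^2. -/

import Mathlib

/-- Binary entropy function (base 2), with the convention `0 log 0 = 0`. -/
noncomputable def hb (x : ℝ) : ℝ := -(x * Real.logb 2 x) - (1 - x) * Real.logb 2 (1 - x)

/-- The function `h_D`. -/
noncomputable def hD (x1 x2 : ℝ) : ℝ := 2 * hb ((x1 + x2) / 2) - hb x1 - hb x2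

open Real Set

private noncomputable def gfun (x : ℝ) : ℝ := Real.binEntropy x + 2 * x ^ 2

private lemma gfun_hasDeriv {x : ℝ} (hx : x ∈ Ioo (0:ℝ) 1) :
    HasDerivAt gfun (Real.log (1 - x) - Real.log x + 4 * x) x := by
  have h1 : HasDerivAt Real.binEntropy (Real.log (1 - x) - Real.log x) x :=
    Real.hasDerivAt_binEntropy (ne_of_gt hx.1) (ne_of_lt hx.2)
  have h2 : HasDerivAt (fun x : ℝ => 2 * x ^ 2) (4 * x) x := by
    have := (hasDerivAt_pow 2 x).const_mul (2:ℝ)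
    refine this.congr_deriv ?_
    push_cast
    ring
  exact h1.add h2

private lemma gfun_concave : ConcaveOn ℝ (Icc (0:ℝ) 1) gfun := by
  have hderiv : ∀ x ∈ Ioo (0:ℝ) 1,
      deriv gfun x = Real.log (1 - x) - Real.log x + 4 * x := fun x hx =>
    (gfun_hasDeriv hx).deriv
  have hderiv2 : ∀ x ∈ Ioo (0:ℝ) 1,
      HasDerivAt (deriv gfun) (-(1 - x)⁻¹ - x⁻¹ + 4) x := by
    intro x hx
    have hφ : HasDerivAt (fun y : ℝ => Real.log (1 - y) - Real.log y + 4 * y)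
        (-(1 - x)⁻¹ - x⁻¹ + 4) x := by
      have hl1 : HasDerivAt (fun y : ℝ => Real.log (1 - y)) (-(1 - x)⁻¹) x := by
        have : HasDerivAt (fun y : ℝ => 1 - y) (-1) x := by
          simpa using (hasDerivAt_id x).const_sub 1
        exact ((Real.hasDerivAt_log (by linarith [hx.2] : (1:ℝ) - x ≠ 0)).comp x this).congr_deriv (by ring)
      have hl2 : HasDerivAt Real.log x⁻¹ x := Real.hasDerivAt_log (ne_of_gt hx.1)
      have hl3 : HasDerivAt (fun y : ℝ => 4 * y) 4 x := by
        simpa using (hasDerivAt_id x).const_mul (4:ℝ)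
      exact (hl1.sub hl2).add hl3
    refine hφ.congr_of_eventuallyEq ?_
    filter_upwards [isOpen_Ioo.mem_nhds hx] with y hy
    exact hderiv y hy
  apply concaveOn_of_deriv2_nonpos (convex_Icc 0 1)
  · exact (Real.binEntropy_continuous.add (by fun_prop)).continuousOn
  · intro x hx
    rw [interior_Icc] at hx
    exact (gfun_hasDeriv hx).differentiableAt.differentiableWithinAt
  · intro x hx
    rw [interior_Icc] at hx
    exact (hderiv2 x hx).differentiableAt.differentiableWithinAt
  · intro x hx
    rw [interior_Icc] at hx
    have := (hderiv2 x hx).deriv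
    simp only [Function.iterate_succ, Function.iterate_zero, Function.comp_apply, id]
    rw [this]
    have h0 : 0 < x := hx.1
    have h1 : 0 < 1 - x := by linarith [hx.2]
    have key : 4 * (x * (1 - x)) ≤ 1 := by nlinarith [sq_nonneg (2 * x - 1)]
    have hxi : (4:ℝ) ≤ x⁻¹ + (1 - x)⁻¹ := by
      rw [inv_add_inv (ne_of_gt h0) (ne_of_gt h1), le_div_iff₀ (by positivity)]
      nlinarith
    linarith

private lemma nat_key (x1 x2 : ℝ) (hx1 : x1 ∈ Set.Icc (0:ℝ) 1)
    (hx2 : x2 ∈ Set.Icc (0:ℝ) 1) :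
    (x1 - x2) ^ 2 ≤ 2 * Real.binEntropy ((x1 + x2) / 2)
      - Real.binEntropy x1 - Real.binEntropy x2 := by
  have := gfun_concave.2 hx1 hx2 (by norm_num : (0:ℝ) ≤ 1/2) (by norm_num : (0:ℝ) ≤ 1/2)
    (by norm_num)
  simp only [gfun, smul_eq_mul] at this
  have hm : (1/2 : ℝ) * x1 + (1/2 : ℝ) * x2 = (x1 + x2) / 2 := by ring
  rw [hm] at this
  nlinarith [this]

theorem hD_ge_sq_diff (x1 x2 : ℝ) (hx1 : x1 ∈ Set.Icc (0:ℝ) 1)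
    (hx2 : x2 ∈ Set.Icc (0:ℝ) 1) : hD x1 x2 ≥ (x1 - x2) ^ 2 := by
  have hlog2 : (0:ℝ) < Real.log 2 := Real.log_pos (by norm_num)
  have hlog2' : Real.log 2 < 1 := by
    have := Real.log_lt_sub_one_of_pos (by norm_num : (0:ℝ) < 2) (by norm_num)
    linarith
  have hb_eq : ∀ x : ℝ, hb x = Real.binEntropy x / Real.log 2 := by
    intro x
    simp only [hb, Real.binEntropy, Real.logb, Real.log_inv]
    field_simp
    ring
  have key := nat_key x1 x2 hx1 hx2
  have : hD x1 x2 = (2 * Real.binEntropy ((x1 + x2) / 2)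
      - Real.binEntropy x1 - Real.binEntropy x2) / Real.log 2 := by
    simp only [hD, hb_eq]; ring
  rw [this, ge_iff_le, le_div_iff₀ hlog2]
  nlinarith [sq_nonneg (x1 - x2)]
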